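/- Let k, δ, n, α be integers with 1 ≤ δ ≤ k, k + δ ≤ n < k + 2δ, and 2 ≤ α. Suppose C_1, …, C_{α−1} ⊆ F_q^{k×(n−k)} are pairwise disjoint sets of matrices such that rank(A − B) ≥ δ for any two distinct A, B in the same C_j, and let C be their union. Then the lifted code {rowspace(I_k | A) : A ∈ C} has the property that any α distinct members U_1, …, U_α satisfy dim(U_1 + ⋯ + U_α) ≥ k + δ. -/

import Mathlib

open scoped Classical

def gaussBinom (q : ℕ) : ℕ → ℕ → ℕ
  | _, 0 => 1
  | 0, _ + 1 => 0
  | n + 1, k + 1 => gaussBinom q n k + q ^ (k + 1) * gaussBinom q n (k + 1)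

def IsPacking (F : Type) [Field F] [Fintype F] (n k t lam : ℕ)
    (S : Finset (Submodule F (Fin n → F))) : Prop :=
  (∀ U ∈ S, Module.finrank F U = k) ∧
    ∀ T : Submodule F (Fin n → F), Module.finrank F T = t →
      (S.filter fun U => T ≤ U).card ≤ lam

noncomputable def packingNumber (F : Type) [Field F] [Fintype F] (n k t lam : ℕ) : ℕ :=
  sSup {m | ∃ S : Finset (Submodule F (Fin n → F)), IsPacking F n k t lam S ∧ S.card = m}

def IsRPacking (F : Type) [Field F] [Fintype F] (n k t lam : ℕ)
    (S : Multiset (Submodule F (Fin n → F))) : Prop :=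
  (∀ U ∈ S, Module.finrank F U = k) ∧
    ∀ T : Submodule F (Fin n → F), Module.finrank F T = t →
      (S.countP fun U => T ≤ U) ≤ lam

noncomputable def rPackingNumber (F : Type) [Field F] [Fintype F] (n k t lam : ℕ) : ℕ :=
  sSup {m | ∃ S : Multiset (Submodule F (Fin n → F)), IsRPacking F n k t lam S ∧ Multiset.card S = m}


section AuxStmt16
open Module Submodule

section aux
variable {F : Type} [Field F] {k m : ℕ}

noncomputable def iotaR (F : Type) [Field F] (k m : ℕ) :
    (Fin m → F) →ₗ[F] (Fin k ⊕ Fin m → F) where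
  toFun v := Sum.elim 0 v
  map_add' v w := by funext s; cases s <;> simp
  map_smul' c v := by funext s; cases s <;> simp

lemma iotaR_inj : Function.Injective (iotaR F k m) := by
  intro v w h
  funext x
  have := congrFun h (Sum.inr x)
  simpa [iotaR] using this

lemma key (M N : Matrix (Fin k) (Fin m) F) (δ : ℕ) (hδ : δ ≤ (M - N).rank) :
    k + δ ≤ finrank F
      ((Submodule.span F (Set.range fun r => Matrix.fromCols (1 : Matrix (Fin k) (Fin k) F) M r)
        ⊔ Submodule.span F (Set.range fun r => Matrix.fromCols (1 : Matrix (Fin k) (Fin k) F) N r) :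
          Submodule F (Fin k ⊕ Fin m → F))) := by
  classical
  set U : Submodule F (Fin k ⊕ Fin m → F) :=
    Submodule.span F (Set.range fun r => Matrix.fromCols 1 M r)
  set V : Submodule F (Fin k ⊕ Fin m → F) :=
    Submodule.span F (Set.range fun r => Matrix.fromCols 1 N r)
  set D := M - N with hD
  set W : Submodule F (Fin k ⊕ Fin m → F) :=
    (Submodule.span F (Set.range D)).map (iotaR F k m)
  -- W ≤ U ⊔ V
  have hWle : W ≤ U ⊔ V := by
    rw [Submodule.map_le_iff_le_comap, Submodule.span_le]
    rintro _ ⟨r, rfl⟩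
    have : iotaR F k m (D r) =
        (Matrix.fromCols (1 : Matrix (Fin k) (Fin k) F) M r)
        - (Matrix.fromCols (1 : Matrix (Fin k) (Fin k) F) N r) := by
      funext s
      cases s with
      | inl s =>
        show (0 : F) = _
        simp [Matrix.fromCols, Pi.sub_apply]
      | inr s =>
        show D r s = _
        simp [Matrix.fromCols, hD, Matrix.sub_apply, Pi.sub_apply]
    rw [SetLike.mem_coe, Submodule.mem_comap, this]
    exact sub_mem (Submodule.mem_sup_left (Submodule.subset_span ⟨r, rfl⟩))
      (Submodule.mem_sup_right (Submodule.subset_span ⟨r, rfl⟩))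
  -- finrank W ≥ δ
  have hWrank : δ ≤ finrank F W := by
    have : finrank F W = finrank F (Submodule.span F (Set.range D)) :=
      (LinearEquiv.finrank_eq (Submodule.equivMapOfInjective _ iotaR_inj _)).symm
    rw [this]
    rw [Matrix.rank_eq_finrank_span_row] at hδ
    exact hδ
  -- finrank U = k
  have hUrank : finrank F U = k := by
    have : U = LinearMap.range (Matrix.fromCols (1 : Matrix (Fin k) (Fin k) F) M).vecMulLinear := by
      rw [_root_.range_vecMulLinear]; rfl
    rw [this]
    have hinj : Function.Injective (Matrix.fromCols (1 : Matrix (Fin k) (Fin k) F) M).vecMulLinear := by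
      intro a b h
      have := congrArg (fun v : Fin k ⊕ Fin m → F => v ∘ Sum.inl) h
      simpa [Matrix.vecMulLinear_apply, Matrix.vecMul_fromCols, Matrix.vecMul_one] using this
    rw [LinearMap.finrank_range_of_inj hinj, finrank_fintype_fun_eq_card, Fintype.card_fin]
  -- U ⊓ W = ⊥
  have hdisj : U ⊓ W = ⊥ := by
    rw [eq_bot_iff]
    rintro u ⟨hu, hw⟩
    have hul : ∀ x ∈ W, ∀ s, x (Sum.inl s) = 0 := by
      intro x hx
      obtain ⟨y, hy, rfl⟩ := hx
      intro s; simp [iotaR]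
    have hU : U = LinearMap.range (Matrix.fromCols (1 : Matrix (Fin k) (Fin k) F) M).vecMulLinear := by
      rw [_root_.range_vecMulLinear]; rfl
    rw [hU] at hu
    obtain ⟨c, rfl⟩ := hu
    have hc : c = 0 := by
      funext s
      have := hul _ hw s
      simpa [Matrix.vecMulLinear_apply, Matrix.vecMul_fromCols, Matrix.vecMul_one] using this
    simp [hc]
  have hle : U ⊔ W ≤ U ⊔ V := sup_le le_sup_left hWle
  calc k + δ ≤ finrank F U + finrank F W := add_le_add hUrank.ge hWrank
    _ = finrank F (U ⊔ W : Submodule F _) + finrank F (U ⊓ W : Submodule F _) :=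
        (Submodule.finrank_sup_add_finrank_inf_eq U W).symm
    _ = finrank F (U ⊔ W : Submodule F _) := by rw [hdisj]; simp
    _ ≤ _ := Submodule.finrank_mono hle

end aux

lemma stmt16_main {F : Type} [Field F] {k m δ α : ℕ} (hα : 2 ≤ α)
    (C : Fin (α - 1) → Set (Matrix (Fin k) (Fin m) F))
    (hrank : ∀ j, ∀ A ∈ C j, ∀ B ∈ C j, A ≠ B → δ ≤ (A - B).rank)
    (A : Fin α → Matrix (Fin k) (Fin m) F) (hAinj : Function.Injective A)
    (hA : ∀ i, A i ∈ ⋃ j, C j) :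
    k + δ ≤ Module.finrank F
      (⨆ i, Submodule.span F (Set.range fun r =>
        Matrix.fromCols (1 : Matrix (Fin k) (Fin k) F) (A i) r) :
          Submodule F (Fin k ⊕ Fin m → F)) := by
  classical
  have hchoice : ∀ i, ∃ j, A i ∈ C j := by
    intro i
    simpa [Set.mem_iUnion] using hA i
  choose f hf using hchoice
  have hcard : Fintype.card (Fin (α - 1)) < Fintype.card (Fin α) := by
    simp only [Fintype.card_fin]; omega
  obtain ⟨i, i', hne, heq⟩ := Fintype.exists_ne_map_eq_of_card_lt f hcard
  have hAne : A i ≠ A i' := fun h => hne (hAinj h)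
  have hr : δ ≤ (A i - A i').rank := hrank (f i) _ (hf i) _ (heq ▸ hf i') hAne
  have h1 := key (A i) (A i') δ hr
  exact le_trans h1 (Submodule.finrank_mono (sup_le (le_iSup (fun i => Submodule.span F (Set.range fun r => Matrix.fromCols (1 : Matrix (Fin k) (Fin k) F) (A i) r)) i) (le_iSup (fun i => Submodule.span F (Set.range fun r => Matrix.fromCols (1 : Matrix (Fin k) (Fin k) F) (A i) r)) i')))

end AuxStmt16

theorem stmt16 (q n k m δ α : ℕ) (F : Type) [Field F] [Fintype F] (hq : Fintype.card F = q)
    (hδ1 : 1 ≤ δ) (hδk : δ ≤ k) (hα : 2 ≤ α) (hn : n = k + m)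
    (hn1 : k + δ ≤ n) (hn2 : n < k + 2 * δ)
    (C : Fin (α - 1) → Set (Matrix (Fin k) (Fin m) F))
    (hdisj : ∀ i j, i ≠ j → Disjoint (C i) (C j))
    (hrank : ∀ j, ∀ A ∈ C j, ∀ B ∈ C j, A ≠ B → δ ≤ (A - B).rank)
    (A : Fin α → Matrix (Fin k) (Fin m) F) (hAinj : Function.Injective A)
    (hA : ∀ i, A i ∈ ⋃ j, C j) :
    k + δ ≤ Module.finrank F
      (⨆ i, Submodule.span F (Set.range fun r =>
        Matrix.fromCols (1 : Matrix (Fin k) (Fin k) F) (A i) r) :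
          Submodule F (Fin k ⊕ Fin m → F)) := by
  exact stmt16_main hα C hrank A hAinj hA
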